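/- Let 𝒬 be a finite collection of pairwise coprime positive integers, and let f : ℕ → ℂ be finitely supported. Suppose that for each q ∈ 𝒬 there is a set S_q of ω(q) residue classes modulo q, with 0 ≤ ω(q) < q, such that f(n) = 0 whenever n mod q lies in S_q. Then for any distinct q₁,…,q_k ∈ 𝒬, ∑_{a mod q₁⋯q_k, with q_j ∤ a for all j=1,…,k} |∑_n f(n)·e(−a·n/(q₁⋯q_k))|² ≥ (∏_{j=1}^k ω(q_j)/(q_j−ω(q_j))) · |∑_n f(n)|², where e(θ) := e^{2πiθ}. -/

import Mathlib

open scoped Classical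

noncomputable def EE (N a n : ℕ) : ℂ :=
  Complex.exp (2 * Real.pi * Complex.I * (-((a : ℂ) * (n : ℂ) / ((N : ℕ) : ℂ))))

lemma EE_add_mul (N a k n : ℕ) (hN : N ≠ 0) : EE N (a + N * k) n = EE N a n := by
  have h : EE N (a + N * k) n
      = EE N a n * Complex.exp (((-(k * n : ℤ) : ℤ) : ℂ) * (2 * Real.pi * Complex.I)) := by
    unfold EE
    rw [← Complex.exp_add]
    congr 1
    have hN' : ((N:ℕ) : ℂ) ≠ 0 := Nat.cast_ne_zero.2 hN
    push_cast
    field_simp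
    ring
  rw [h, Complex.exp_int_mul_two_pi_mul_I, mul_one]

lemma EE_mod (N a n : ℕ) (hN : N ≠ 0) : EE N (a % N) n = EE N a n := by
  conv_rhs => rw [← Nat.mod_add_div a N]
  rw [EE_add_mul _ _ _ _ hN]

lemma EE_split (q N₀ a₁ a₂ n : ℕ) (hq : q ≠ 0) (hN₀ : N₀ ≠ 0) :
    EE (q * N₀) (a₁ * N₀ + a₂ * q) n = EE q a₁ n * EE N₀ a₂ n := by
  unfold EE
  rw [← Complex.exp_add]
  congr 1
  have h1 : ((q:ℕ) : ℂ) ≠ 0 := Nat.cast_ne_zero.2 hq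
  have h2 : ((N₀:ℕ) : ℂ) ≠ 0 := Nat.cast_ne_zero.2 hN₀
  push_cast
  field_simp
  ring

lemma EE_eq_char (N : ℕ) [NeZero N] (a n : ℕ) :
    EE N a n = ZMod.stdAddChar (-((a : ZMod N) * (n : ZMod N))) := by
  have h := ZMod.stdAddChar_coe (N := N) (-(a * n : ℤ))
  have hcast : ((-(a * n : ℤ) : ℤ) : ZMod N) = -((a : ZMod N) * (n : ZMod N)) := by push_cast; ring
  rw [hcast] at h
  rw [h]
  unfold EE
  congr 1
  push_cast
  ring

lemma conj_char (N : ℕ) [NeZero N] (j : ZMod N) :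
    (starRingEnd ℂ) (ZMod.stdAddChar j) = ZMod.stdAddChar (-j) := by
  have habs : ‖ZMod.stdAddChar j‖ = 1 := by
    rw [ZMod.stdAddChar_apply]; exact Circle.norm_coe _
  have hinv : (ZMod.stdAddChar j)⁻¹ = ZMod.stdAddChar (-j) := by
    refine inv_eq_of_mul_eq_one_right ?_
    rw [← AddChar.map_add_eq_mul, add_neg_cancel, AddChar.map_zero_eq_one]
  rw [← hinv, Complex.inv_def, Complex.normSq_eq_norm_sq, habs]
  simp

lemma parseval (N : ℕ) [NeZero N] (c : ZMod N → ℂ) :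
    ∑ x : ZMod N, Complex.normSq (∑ b : ZMod N, c b * ZMod.stdAddChar (-(x * b)))
      = N * ∑ b : ZMod N, Complex.normSq (c b) := by
  have key : ∑ x : ZMod N, (∑ b : ZMod N, c b * ZMod.stdAddChar (-(x * b))) *
        (starRingEnd ℂ) (∑ b : ZMod N, c b * ZMod.stdAddChar (-(x * b)))
      = (N : ℂ) * ∑ b : ZMod N, c b * (starRingEnd ℂ) (c b) := by
    have h1 : ∀ x : ZMod N, (∑ b : ZMod N, c b * ZMod.stdAddChar (-(x * b))) *
        (starRingEnd ℂ) (∑ b : ZMod N, c b * ZMod.stdAddChar (-(x * b)))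
        = ∑ b : ZMod N, ∑ b' : ZMod N,
            (c b * (starRingEnd ℂ) (c b')) * ZMod.stdAddChar (x * (b' - b)) := by
      intro x
      rw [map_sum, Finset.sum_mul_sum]
      refine Finset.sum_congr rfl fun b _ => Finset.sum_congr rfl fun b' _ => ?_
      rw [map_mul, conj_char, neg_neg, mul_mul_mul_comm, ← AddChar.map_add_eq_mul]
      ring_nf
    simp_rw [h1]
    rw [Finset.sum_comm]
    have h2 : ∀ b : ZMod N, ∑ x : ZMod N, ∑ b' : ZMod N,
        (c b * (starRingEnd ℂ) (c b')) * ZMod.stdAddChar (x * (b' - b))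
        = ∑ b' : ZMod N, (c b * (starRingEnd ℂ) (c b')) *
            ∑ x : ZMod N, ZMod.stdAddChar (x * (b' - b)) := by
      intro b
      rw [Finset.sum_comm]
      exact Finset.sum_congr rfl fun b' _ => (Finset.mul_sum _ _ _).symm
    simp_rw [h2, AddChar.sum_mulShift _ (ZMod.isPrimitive_stdAddChar N), sub_eq_zero,
      apply_ite (Nat.cast : ℕ → ℂ), Nat.cast_zero, mul_ite, mul_zero,
      Finset.sum_ite_eq' Finset.univ, Finset.mem_univ, if_true]
    rw [Finset.mul_sum]
    refine Finset.sum_congr rfl fun b _ => ?_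
    simp only [ZMod.card]
    ring
  have lhs : ((∑ x : ZMod N, Complex.normSq (∑ b : ZMod N, c b * ZMod.stdAddChar (-(x * b))) : ℝ) : ℂ)
      = (N : ℂ) * ((∑ b : ZMod N, Complex.normSq (c b) : ℝ) : ℂ) := by
    push_cast
    simp_rw [← Complex.mul_conj]
    rw [key, Finset.mul_sum]
  exact_mod_cast lhs

lemma cs_bound (q : ℕ) [NeZero q] (S : Finset (ZMod q)) (c : ZMod q → ℂ)
    (hc : ∀ b ∈ S, c b = 0) :
    Complex.normSq (∑ b : ZMod q, c b) ≤ ((q : ℝ) - S.card) * ∑ b : ZMod q, Complex.normSq (c b) := by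
  have h0 : ∑ b : ZMod q, c b = ∑ b ∈ Sᶜ, c b := by
    rw [← Finset.sum_add_sum_compl S]
    rw [Finset.sum_eq_zero hc, zero_add]
  have h1 : ‖∑ b ∈ Sᶜ, c b‖ ≤ ∑ b ∈ Sᶜ, ‖c b‖ :=
    by simpa using norm_sum_le (Sᶜ) c
  have h2 : (∑ b ∈ Sᶜ, ‖c b‖) ^ 2 ≤ (Sᶜ).card * ∑ b ∈ Sᶜ, ‖c b‖ ^ 2 :=
    sq_sum_le_card_mul_sum_sq
  have h3 : ((Sᶜ).card : ℝ) = (q : ℝ) - S.card := by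
    have hle : S.card ≤ q := by simpa [ZMod.card] using Finset.card_le_univ S
    rw [Finset.card_compl, Fintype.card_eq_nat_card, Nat.card_zmod, Nat.cast_sub hle]
  have h4 : ∑ b ∈ Sᶜ, ‖c b‖ ^ 2 ≤ ∑ b : ZMod q, Complex.normSq (c b) := by
    simp_rw [Complex.sq_norm]
    exact Finset.sum_le_sum_of_subset_of_nonneg (Finset.subset_univ _)
      (fun b _ _ => Complex.normSq_nonneg _)
  have h5 : Complex.normSq (∑ b : ZMod q, c b) ≤ (∑ b ∈ Sᶜ, ‖c b‖) ^ 2 := by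
    rw [h0, ← Complex.sq_norm]
    have := norm_nonneg (∑ b ∈ Sᶜ, c b)
    nlinarith
  have hcard : (0:ℝ) ≤ ((Sᶜ).card : ℝ) := Nat.cast_nonneg _
  calc Complex.normSq (∑ b : ZMod q, c b) ≤ (Sᶜ).card * ∑ b ∈ Sᶜ, ‖c b‖ ^ 2 :=
        le_trans h5 h2
    _ ≤ ((q : ℝ) - S.card) * ∑ b : ZMod q, Complex.normSq (c b) := by
        rw [← h3]; exact mul_le_mul_of_nonneg_left h4 hcard

lemma lemA (q : ℕ) (hq : q ≠ 0) (S : Finset (ZMod q)) (hωq : S.card < q)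
    (A : Finset ℕ) (g : ℕ → ℂ) (hvan : ∀ n : ℕ, (n : ZMod q) ∈ S → g n = 0) :
    ((S.card : ℝ) / ((q : ℝ) - S.card)) * ‖∑ n ∈ A, g n‖ ^ 2 ≤
      ∑ a ∈ (Finset.range q).filter (· ≠ 0), ‖∑ n ∈ A, g n * EE q a n‖ ^ 2 := by
  haveI : NeZero q := ⟨hq⟩
  set c : ZMod q → ℂ := fun b => ∑ n ∈ A.filter (fun n : ℕ => (n : ZMod q) = b), g n with hc
  have hc0 : ∀ b ∈ S, c b = 0 := by
    intro b hb
    refine Finset.sum_eq_zero fun n hn => ?_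
    exact hvan n (((Finset.mem_filter.1 hn).2) ▸ hb)
  have hsum : ∑ n ∈ A, g n = ∑ b : ZMod q, c b :=
    (Finset.sum_fiberwise A (fun n => (n : ZMod q)) g).symm
  have hG : ∀ a : ℕ, ∑ n ∈ A, g n * EE q a n
      = ∑ b : ZMod q, c b * ZMod.stdAddChar (-((a : ZMod q) * b)) := by
    intro a
    rw [← Finset.sum_fiberwise A (fun n => (n : ZMod q)) (fun n => g n * EE q a n)]
    refine Finset.sum_congr rfl fun b _ => ?_
    rw [hc, Finset.sum_mul]
    refine Finset.sum_congr rfl fun n hn => ?_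
    rw [EE_eq_char, (Finset.mem_filter.1 hn).2]
  -- reindex the a-sum to ZMod q
  have hreindex : ∑ a ∈ (Finset.range q).filter (· ≠ 0), ‖∑ n ∈ A, g n * EE q a n‖ ^ 2
      = ∑ x ∈ Finset.univ.erase (0 : ZMod q),
          Complex.normSq (∑ b : ZMod q, c b * ZMod.stdAddChar (-(x * b))) := by
    refine Finset.sum_nbij' (fun a => (a : ZMod q)) (fun x => x.val) ?_ ?_ ?_ ?_ ?_
    · intro a ha
      simp only [Finset.mem_filter, Finset.mem_range] at ha
      refine Finset.mem_erase.2 ⟨?_, Finset.mem_univ _⟩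
      rw [Ne, ZMod.natCast_eq_zero_iff]
      intro hdvd
      exact ha.2 (Nat.eq_zero_of_dvd_of_lt hdvd ha.1)
    · intro x hx
      simp only [Finset.mem_erase, Finset.mem_univ, and_true] at hx
      refine Finset.mem_filter.2 ⟨Finset.mem_range.2 (ZMod.val_lt x), ?_⟩
      simpa [ZMod.val_eq_zero] using hx
    · intro a ha
      simp only [Finset.mem_filter, Finset.mem_range] at ha
      exact ZMod.val_cast_of_lt ha.1
    · intro x _
      exact ZMod.natCast_zmod_val x
    · intro a _
      rw [hG a, Complex.sq_norm]
  -- now combine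
  rw [hreindex, hsum, Complex.sq_norm]
  have htotal := parseval q c
  have hzeroterm : Complex.normSq (∑ b : ZMod q, c b * ZMod.stdAddChar (-((0:ZMod q) * b)))
      = Complex.normSq (∑ b : ZMod q, c b) := by
    congr 1
    refine Finset.sum_congr rfl fun b _ => ?_
    simp [AddChar.map_zero_eq_one]
  have hsplit : ∑ x ∈ Finset.univ.erase (0 : ZMod q),
        Complex.normSq (∑ b : ZMod q, c b * ZMod.stdAddChar (-(x * b)))
      = q * (∑ b : ZMod q, Complex.normSq (c b)) - Complex.normSq (∑ b : ZMod q, c b) := by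
    have := Finset.add_sum_erase Finset.univ
      (fun x => Complex.normSq (∑ b : ZMod q, c b * ZMod.stdAddChar (-(x * b))))
      (Finset.mem_univ (0 : ZMod q))
    rw [htotal] at this
    rw [← hzeroterm]
    linarith [this]
  rw [hsplit]
  have hcs := cs_bound q S c hc0
  set s := Complex.normSq (∑ b : ZMod q, c b) with hs
  set t := ∑ b : ZMod q, Complex.normSq (c b) with ht
  have hqω : (0:ℝ) < (q:ℝ) - S.card := by
    have : (S.card : ℝ) < q := by exact_mod_cast hωq
    linarith
  have haux : (S.card : ℝ) / ((q:ℝ) - S.card) * s ≤ S.card * t := by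
    rw [div_mul_eq_mul_div, div_le_iff₀ hqω]
    have hcard : (0:ℝ) ≤ (S.card : ℝ) := Nat.cast_nonneg _
    nlinarith
  linarith

lemma crt_key (q N₀ : ℕ) (hq : q ≠ 0) (hN₀ : N₀ ≠ 0) (hcop : Nat.Coprime q N₀)
    (a : ℕ) (ha : a < q * N₀) :
    ((((a : ZMod q) * (N₀ : ZMod q)⁻¹).val * N₀ + ((a : ZMod N₀) * (q : ZMod N₀)⁻¹).val * q)
      % (q * N₀)) = a := by
  haveI : NeZero q := ⟨hq⟩
  haveI : NeZero N₀ := ⟨hN₀⟩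
  set x := (((a : ZMod q) * (N₀ : ZMod q)⁻¹).val * N₀ + ((a : ZMod N₀) * (q : ZMod N₀)⁻¹).val * q)
    with hx
  have hN₀unit : IsUnit ((N₀ : ℕ) : ZMod q) := (ZMod.isUnit_iff_coprime N₀ q).2 hcop.symm
  have hqunit : IsUnit ((q : ℕ) : ZMod N₀) := (ZMod.isUnit_iff_coprime q N₀).2 hcop
  have hmodq : x ≡ a [MOD q] := by
    rw [← ZMod.natCast_eq_natCast_iff]
    push_cast [hx]
    rw [ZMod.natCast_self, mul_zero, add_zero, ZMod.natCast_zmod_val, mul_assoc,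
      ZMod.inv_mul_of_unit _ hN₀unit, mul_one]
  have hmodN₀ : x ≡ a [MOD N₀] := by
    rw [← ZMod.natCast_eq_natCast_iff]
    push_cast [hx]
    rw [ZMod.natCast_self, mul_zero, zero_add, ZMod.natCast_zmod_val, mul_assoc,
      ZMod.inv_mul_of_unit _ hqunit, mul_one]
  have hmod : x ≡ a [MOD q * N₀] := (Nat.modEq_and_modEq_iff_modEq_mul hcop).1 ⟨hmodq, hmodN₀⟩
  calc x % (q * N₀) = a % (q * N₀) := hmod
    _ = a := Nat.mod_eq_of_lt ha

lemma crt_bij (q N₀ : ℕ) (hq : q ≠ 0) (hN₀ : N₀ ≠ 0) (hcop : Nat.Coprime q N₀) (F : ℕ → ℝ) :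
    ∑ a ∈ Finset.range (q * N₀), F a
      = ∑ p ∈ Finset.range q ×ˢ Finset.range N₀, F ((p.1 * N₀ + p.2 * q) % (q * N₀)) := by
  haveI : NeZero q := ⟨hq⟩
  haveI : NeZero N₀ := ⟨hN₀⟩
  have hN : 0 < q * N₀ := Nat.pos_of_ne_zero (mul_ne_zero hq hN₀)
  refine Finset.sum_nbij'
    (fun a => ((((a : ℕ) : ZMod q) * (N₀ : ZMod q)⁻¹).val, (((a : ℕ) : ZMod N₀) * (q : ZMod N₀)⁻¹).val))
    (fun p => (p.1 * N₀ + p.2 * q) % (q * N₀)) ?_ ?_ ?_ ?_ ?_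
  · intro a _
    exact Finset.mem_product.2 ⟨Finset.mem_range.2 (ZMod.val_lt _), Finset.mem_range.2 (ZMod.val_lt _)⟩
  · intro p _
    exact Finset.mem_range.2 (Nat.mod_lt _ hN)
  · intro a ha
    exact crt_key q N₀ hq hN₀ hcop a (Finset.mem_range.1 ha)
  · intro p hp
    obtain ⟨hp1, hp2⟩ := Finset.mem_product.1 hp
    rw [Finset.mem_range] at hp1 hp2
    have hN₀unit : IsUnit ((N₀ : ℕ) : ZMod q) := (ZMod.isUnit_iff_coprime N₀ q).2 hcop.symm
    have hqunit : IsUnit ((q : ℕ) : ZMod N₀) := (ZMod.isUnit_iff_coprime q N₀).2 hcop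
    have hcast1 : (((p.1 * N₀ + p.2 * q) % (q * N₀) : ℕ) : ZMod q) = ((p.1 * N₀ + p.2 * q : ℕ) : ZMod q) := by
      rw [ZMod.natCast_eq_natCast_iff]
      exact (Nat.mod_modEq _ _).of_dvd ⟨N₀, rfl⟩
    have hcast2 : (((p.1 * N₀ + p.2 * q) % (q * N₀) : ℕ) : ZMod N₀) = ((p.1 * N₀ + p.2 * q : ℕ) : ZMod N₀) := by
      rw [ZMod.natCast_eq_natCast_iff]
      exact (Nat.mod_modEq _ _).of_dvd ⟨q, mul_comm q N₀⟩
    have e1 : ((((p.1 * N₀ + p.2 * q) % (q * N₀) : ℕ) : ZMod q) * (N₀ : ZMod q)⁻¹).val = p.1 := by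
      rw [hcast1]
      push_cast
      rw [ZMod.natCast_self, mul_zero, add_zero, mul_assoc,
        ZMod.mul_inv_of_unit _ hN₀unit, mul_one, ZMod.val_cast_of_lt hp1]
    have e2 : ((((p.1 * N₀ + p.2 * q) % (q * N₀) : ℕ) : ZMod N₀) * (q : ZMod N₀)⁻¹).val = p.2 := by
      rw [hcast2]
      push_cast
      rw [ZMod.natCast_self, mul_zero, zero_add, mul_assoc,
        ZMod.mul_inv_of_unit _ hqunit, mul_one, ZMod.val_cast_of_lt hp2]
    exact Prod.ext e1 e2
  · intro a ha
    rw [crt_key q N₀ hq hN₀ hcop a (Finset.mem_range.1 ha)]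

lemma main_ind (Q : Finset ℕ) (hQpos : ∀ q ∈ Q, 0 < q)
    (hQcop : ∀ q ∈ Q, ∀ q' ∈ Q, q ≠ q' → Nat.Coprime q q')
    (A : Finset ℕ) (f : ℕ → ℂ) (ω : ℕ → ℕ) (S : (q : ℕ) → Finset (ZMod q))
    (hScard : ∀ q ∈ Q, (S q).card = ω q) (hω : ∀ q ∈ Q, ω q < q)
    (hvanish : ∀ q ∈ Q, ∀ n : ℕ, (n : ZMod q) ∈ S q → f n = 0)
    (T : Finset ℕ) : T ⊆ Q →
    (∏ q ∈ T, (ω q : ℝ) / ((q : ℝ) - (ω q : ℝ))) * ‖∑ n ∈ A, f n‖ ^ 2 ≤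
      ∑ a ∈ (Finset.range (∏ q ∈ T, q)).filter (fun a => ∀ q ∈ T, ¬ q ∣ a),
        ‖∑ n ∈ A, f n * EE (∏ q ∈ T, q) a n‖ ^ 2 := by
  induction T using Finset.induction_on with
  | empty =>
      intro _
      simp [EE]
  | @insert q T₀ hqT₀ ih =>
      intro hsub
      have hqQ : q ∈ Q := hsub (Finset.mem_insert_self q T₀)
      have hT₀Q : T₀ ⊆ Q := fun x hx => hsub (Finset.mem_insert_of_mem hx)
      have hq0 : q ≠ 0 := (hQpos q hqQ).ne'
      set N₀ := ∏ q' ∈ T₀, q' with hN₀def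
      have hN₀0 : N₀ ≠ 0 := Finset.prod_ne_zero_iff.2 fun q' hq' => (hQpos q' (hT₀Q hq')).ne'
      have hcop : Nat.Coprime q N₀ := Nat.Coprime.prod_right fun q' hq' =>
        hQcop q hqQ q' (hT₀Q hq') (fun h => hqT₀ (h ▸ hq'))
      have hprodN : ∏ q' ∈ insert q T₀, q' = q * N₀ := Finset.prod_insert hqT₀
      rw [hprodN, Finset.prod_insert hqT₀]
      -- rewrite the filter
      have hfilter : ((Finset.range (q * N₀)).filter (fun a => ∀ q' ∈ insert q T₀, ¬ q' ∣ a))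
          = (Finset.range (q * N₀)).filter (fun a => ¬ q ∣ a ∧ ∀ q' ∈ T₀, ¬ q' ∣ a) :=
        Finset.filter_congr fun a _ => Finset.forall_mem_insert _ _ _
      rw [hfilter, Finset.sum_filter]
      rw [crt_bij q N₀ hq0 hN₀0 hcop
        (fun a => if (¬ q ∣ a ∧ ∀ q' ∈ T₀, ¬ q' ∣ a)
          then ‖∑ n ∈ A, f n * EE (q * N₀) a n‖ ^ 2 else 0)]
      -- pointwise rewrite over the product
      have hpt : ∀ p ∈ Finset.range q ×ˢ Finset.range N₀,
          (if (¬ q ∣ ((p.1 * N₀ + p.2 * q) % (q * N₀))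
              ∧ ∀ q' ∈ T₀, ¬ q' ∣ ((p.1 * N₀ + p.2 * q) % (q * N₀)))
            then ‖∑ n ∈ A, f n * EE (q * N₀) ((p.1 * N₀ + p.2 * q) % (q * N₀)) n‖ ^ 2
            else 0)
          = if (p.1 ≠ 0 ∧ ∀ q' ∈ T₀, ¬ q' ∣ p.2)
            then ‖∑ n ∈ A, (f n * EE N₀ p.2 n) * EE q p.1 n‖ ^ 2 else 0 := by
        rintro ⟨a₁, a₂⟩ hp
        obtain ⟨hp1, hp2⟩ := Finset.mem_product.1 hp
        rw [Finset.mem_range] at hp1 hp2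
        have hNdvd : q ∣ q * N₀ := ⟨N₀, rfl⟩
        have hcond : (¬ q ∣ ((a₁ * N₀ + a₂ * q) % (q * N₀))
              ∧ ∀ q' ∈ T₀, ¬ q' ∣ ((a₁ * N₀ + a₂ * q) % (q * N₀)))
            ↔ (a₁ ≠ 0 ∧ ∀ q' ∈ T₀, ¬ q' ∣ a₂) := by
          constructor
          · rintro ⟨h1, h2⟩
            constructor
            · intro h0
              apply h1
              rw [Nat.dvd_mod_iff hNdvd, h0, zero_mul, zero_add]
              exact dvd_mul_left q a₂
            · intro q' hq' hdvd
              have hq'N₀ : q' ∣ N₀ := Finset.dvd_prod_of_mem _ hq'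
              apply h2 q' hq'
              rw [Nat.dvd_mod_iff (hq'N₀.mul_left q)]
              exact Dvd.dvd.add (hq'N₀.mul_left a₁) (hdvd.mul_right q)
          · rintro ⟨h1, h2⟩
            constructor
            · rw [Nat.dvd_mod_iff hNdvd]
              intro hdvd
              have : q ∣ a₁ * N₀ := (Nat.dvd_add_right (dvd_mul_left q a₂)).1
                (by rwa [add_comm] at hdvd)
              have : q ∣ a₁ := hcop.dvd_of_dvd_mul_right this
              exact h1 (Nat.eq_zero_of_dvd_of_lt this hp1)
            · intro q' hq'
              have hq'N₀ : q' ∣ N₀ := Finset.dvd_prod_of_mem _ hq'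
              rw [Nat.dvd_mod_iff (hq'N₀.mul_left q)]
              intro hdvd
              have h3 : q' ∣ a₂ * q := (Nat.dvd_add_right (hq'N₀.mul_left a₁)).1 hdvd
              have hcop' : Nat.Coprime q' q := hQcop q' (hT₀Q hq') q hqQ
                (fun h => hqT₀ (h ▸ hq'))
              exact h2 q' hq' (hcop'.dvd_of_dvd_mul_right h3)
        have hval : ‖∑ n ∈ A, f n * EE (q * N₀) ((a₁ * N₀ + a₂ * q) % (q * N₀)) n‖ ^ 2
            = ‖∑ n ∈ A, (f n * EE N₀ a₂ n) * EE q a₁ n‖ ^ 2 := by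
          congr 1
          congr 1
          refine Finset.sum_congr rfl fun n _ => ?_
          rw [EE_mod _ _ _ (mul_ne_zero hq0 hN₀0), EE_split q N₀ a₁ a₂ n hq0 hN₀0]
          ring
        simp only [hval]
        exact if_congr hcond rfl rfl
      rw [Finset.sum_congr rfl hpt]
      -- convert to iterated filtered sums
      have hsum2 : ∑ p ∈ Finset.range q ×ˢ Finset.range N₀,
            (if (p.1 ≠ 0 ∧ ∀ q' ∈ T₀, ¬ q' ∣ p.2)
              then ‖∑ n ∈ A, (f n * EE N₀ p.2 n) * EE q p.1 n‖ ^ 2 else 0)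
          = ∑ a₂ ∈ (Finset.range N₀).filter (fun a₂ => ∀ q' ∈ T₀, ¬ q' ∣ a₂),
              ∑ a₁ ∈ (Finset.range q).filter (· ≠ 0),
                ‖∑ n ∈ A, (f n * EE N₀ a₂ n) * EE q a₁ n‖ ^ 2 := by
        rw [Finset.sum_product]
        rw [Finset.sum_comm]
        rw [Finset.sum_filter]
        refine Finset.sum_congr rfl fun a₂ _ => ?_
        rw [Finset.sum_filter]
        by_cases hC : ∀ q' ∈ T₀, ¬ q' ∣ a₂
        · rw [if_pos hC]
          refine Finset.sum_congr rfl fun a₁ _ => ?_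
          by_cases h1 : a₁ ≠ 0
          · rw [if_pos ⟨h1, hC⟩, if_pos h1]
          · rw [if_neg (fun h => h1 h.1), if_neg h1]
        · rw [if_neg hC]
          refine Finset.sum_eq_zero fun a₁ _ => ?_
          simp [hC]
      -- apply lemA to the inner sums
      have hratio : (0:ℝ) ≤ (ω q : ℝ) / ((q : ℝ) - (ω q : ℝ)) := by
        have h1 : (ω q : ℝ) < q := by exact_mod_cast hω q hqQ
        exact div_nonneg (Nat.cast_nonneg _) (by linarith)
      have hinner : ∀ a₂ : ℕ, ((ω q : ℝ) / ((q : ℝ) - (ω q : ℝ)))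
            * ‖∑ n ∈ A, f n * EE N₀ a₂ n‖ ^ 2
          ≤ ∑ a₁ ∈ (Finset.range q).filter (· ≠ 0),
              ‖∑ n ∈ A, (f n * EE N₀ a₂ n) * EE q a₁ n‖ ^ 2 := by
        intro a₂
        have hcard : (S q).card < q := by rw [hScard q hqQ]; exact hω q hqQ
        have := lemA q hq0 (S q) hcard A (fun n => f n * EE N₀ a₂ n)
          (fun n hn => by show f n * EE N₀ a₂ n = 0; rw [hvanish q hqQ n hn, zero_mul])
        rwa [hScard q hqQ] at this
      rw [hsum2, mul_assoc]
      refine le_trans (mul_le_mul_of_nonneg_left (ih hT₀Q) hratio) ?_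
      rw [Finset.mul_sum]
      exact Finset.sum_le_sum fun a₂ _ => hinner a₂

theorem stmt_17 (Q : Finset ℕ) (hQpos : ∀ q ∈ Q, 0 < q)
    (hQcop : ∀ q ∈ Q, ∀ q' ∈ Q, q ≠ q' → Nat.Coprime q q')
    (f : ℕ → ℂ) (hf : (Function.support f).Finite)
    (ω : ℕ → ℕ) (S : (q : ℕ) → Finset (ZMod q))
    (hScard : ∀ q ∈ Q, (S q).card = ω q)
    (hω : ∀ q ∈ Q, ω q < q)
    (hvanish : ∀ q ∈ Q, ∀ n : ℕ, (n : ZMod q) ∈ S q → f n = 0)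
    (T : Finset ℕ) (hT : T ⊆ Q) :
    (∏ q ∈ T, (ω q : ℝ) / ((q : ℝ) - (ω q : ℝ))) * ‖∑' n : ℕ, f n‖ ^ 2 ≤
      ∑ a ∈ (Finset.range (∏ q ∈ T, q)).filter (fun a => ∀ q ∈ T, ¬ q ∣ a),
        ‖∑' n : ℕ,
          f n * Complex.exp (2 * Real.pi * Complex.I *
            (-((a : ℂ) * (n : ℂ) / ((∏ q ∈ T, q : ℕ) : ℂ))))‖ ^ 2 := by
  have hzero : ∀ n : ℕ, n ∉ hf.toFinset → f n = 0 := by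
    intro n hn
    by_contra h
    exact hn (hf.mem_toFinset.2 h)
  have h1 : (∑' n : ℕ, f n) = ∑ n ∈ hf.toFinset, f n := tsum_eq_sum hzero
  have h2 : ∀ a : ℕ,
      (∑' n : ℕ, f n * Complex.exp (2 * Real.pi * Complex.I *
          (-((a : ℂ) * (n : ℂ) / ((∏ q ∈ T, q : ℕ) : ℂ)))))
        = ∑ n ∈ hf.toFinset, f n * EE (∏ q ∈ T, q) a n := by
    intro a
    exact tsum_eq_sum fun n hn => by rw [hzero n hn, zero_mul]
  have h3 : ∑ a ∈ (Finset.range (∏ q ∈ T, q)).filter (fun a => ∀ q ∈ T, ¬ q ∣ a),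
        ‖∑' n : ℕ,
          f n * Complex.exp (2 * Real.pi * Complex.I *
            (-((a : ℂ) * (n : ℂ) / ((∏ q ∈ T, q : ℕ) : ℂ))))‖ ^ 2
      = ∑ a ∈ (Finset.range (∏ q ∈ T, q)).filter (fun a => ∀ q ∈ T, ¬ q ∣ a),
        ‖∑ n ∈ hf.toFinset, f n * EE (∏ q ∈ T, q) a n‖ ^ 2 :=
    Finset.sum_congr rfl fun a _ => by rw [h2 a]
  rw [h1, h3]
  exact main_ind Q hQpos hQcop hf.toFinset f ω S hScard hω hvanish T hT
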